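/- Let Θ* be a symmetric positive definite d×d matrix and c ≥ 0. Then the function H ↦ −½ ln Det(I − (Θ*)^{1/2}H(Θ*)^{1/2}) + c · ‖(Θ*)^{1/2}H(Θ*)^{1/2}‖_F² / (1 − ‖(Θ*)^{1/2}H(Θ*)^{1/2}‖) is convex on the open convex set ℋ° = {H symmetric d×d : −(Θ*)⁻¹ ≺ H ≺ (Θ*)⁻¹}. -/

import Mathlib

open Matrix

/-- The spectral norm of a square real matrix. -/
noncomputable def specNorm {d : ℕ} (M : Matrix (Fin d) (Fin d) ℝ) : ℝ :=
  ‖Matrix.toEuclideanCLM (𝕜 := ℝ) M‖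

/-- The Frobenius norm of a square real matrix. -/
noncomputable def frobNorm {d : ℕ} (M : Matrix (Fin d) (Fin d) ℝ) : ℝ :=
  Real.sqrt (∑ i, ∑ j, (M i j)^2)

/-- The square root of a positive semidefinite matrix, as defined in the older Mathlib
(`Matrix.PosSemidef.sqrt`, removed since). -/
noncomputable def Matrix.PosSemidef.sqrt {n : Type*} [Fintype n] [DecidableEq n]
    {A : Matrix n n ℝ} (hA : A.PosSemidef) : Matrix n n ℝ :=
  hA.1.eigenvectorUnitary * diagonal ((fun x : ℝ => Real.sqrt x) ∘ hA.1.eigenvalues) *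
    (star hA.1.eigenvectorUnitary : Matrix n n ℝ)

theorem Matrix.PosSemidef.posSemidef_sqrt {n : Type*} [Fintype n] [DecidableEq n]
    {A : Matrix n n ℝ} (hA : A.PosSemidef) : hA.sqrt.PosSemidef := by
  unfold Matrix.PosSemidef.sqrt
  exact (PosSemidef.diagonal (fun i => Real.sqrt_nonneg _)).mul_mul_conjTranspose_same _

theorem Matrix.PosSemidef.sqrt_mul_self {n : Type*} [Fintype n] [DecidableEq n]
    {A : Matrix n n ℝ} (hA : A.PosSemidef) : hA.sqrt * hA.sqrt = A := by
  unfold Matrix.PosSemidef.sqrt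
  have hUU : star (hA.1.eigenvectorUnitary : Matrix n n ℝ) * hA.1.eigenvectorUnitary = 1 :=
    (Matrix.mem_unitaryGroup_iff').mp hA.1.eigenvectorUnitary.2
  have hD : diagonal ((fun x : ℝ => Real.sqrt x) ∘ hA.1.eigenvalues) *
      diagonal ((fun x : ℝ => Real.sqrt x) ∘ hA.1.eigenvalues) = diagonal hA.1.eigenvalues := by
    rw [diagonal_mul_diagonal]; congr 1; funext i
    exact Real.mul_self_sqrt (hA.eigenvalues_nonneg i)
  simp only [← mul_assoc]
  rw [mul_assoc _ (star (hA.1.eigenvectorUnitary : Matrix n n ℝ)), hUU, mul_one, mul_assoc _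
    (diagonal _) (diagonal _), hD]
  have h := hA.1.spectral_theorem
  simpa using h.symm

set_option maxHeartbeats 1000000
set_option synthInstance.maxHeartbeats 400000

namespace Stmt13Aux

variable {d : ℕ}

lemma isHermitian_of_isSymm {H : Matrix (Fin d) (Fin d) ℝ} (h : H.IsSymm) : H.IsHermitian := by
  ext i j
  simp only [conjTranspose_apply, star_trivial]
  exact h.apply i j

lemma posDef_conj {A B : Matrix (Fin d) (Fin d) ℝ} (hA : A.PosDef) (hB : B.IsHermitian)
    (hBu : IsUnit B) : (B * A * B).PosDef := by
  have hvm : ∀ x : Fin d → ℝ, x ᵥ* B = B *ᵥ x := by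
    intro x
    conv_lhs => rw [← hB]
    simpa using (star_mulVec (M := B) (v := x)).symm
  refine PosDef.of_dotProduct_mulVec_pos ?_ ?_
  · show (B * A * B)ᴴ = B * A * B
    rw [conjTranspose_mul, conjTranspose_mul, hA.1, hB, mul_assoc]
  · intro x hx
    have hBx : B *ᵥ x ≠ 0 := by
      intro hcon
      exact hx (Matrix.mulVec_injective_iff_isUnit.mpr hBu (by simpa using hcon))
    have h := hA.dotProduct_mulVec_pos hBx
    simp only [star_trivial] at h ⊢
    calc 0 < (B *ᵥ x) ⬝ᵥ (A *ᵥ (B *ᵥ x)) := h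
      _ = x ⬝ᵥ ((B * A * B) *ᵥ x) := by
          rw [← mulVec_mulVec, ← mulVec_mulVec, dotProduct_mulVec x B, hvm x]

lemma posDef_smul {A : Matrix (Fin d) (Fin d) ℝ} (hA : A.PosDef) {r : ℝ} (hr : 0 < r) :
    (r • A).PosDef := by
  refine PosDef.of_dotProduct_mulVec_pos ?_ fun x hx => ?_
  · show (r • A)ᴴ = r • A
    rw [conjTranspose_smul, hA.1, star_trivial]
  · rw [smul_mulVec]
    simp only [star_trivial, dotProduct_smul, smul_eq_mul]
    exact mul_pos hr (hA.dotProduct_mulVec_pos hx)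

lemma logdet_concave {X Y : Matrix (Fin d) (Fin d) ℝ} (hX : X.PosDef) (hY : Y.PosDef)
    {a b : ℝ} (ha : 0 ≤ a) (hb : 0 ≤ b) (hab : a + b = 1) :
    a * Real.log X.det + b * Real.log Y.det ≤ Real.log (a • X + b • Y).det := by
  rcases eq_or_lt_of_le ha with ha0 | ha0
  · have hb1 : b = 1 := by linarith
    rw [← ha0, hb1]; simp
  rcases eq_or_lt_of_le hb with hb0 | hb0
  · have ha1 : a = 1 := by linarith
    rw [← hb0, ha1]; simp
  set R := hX.posSemidef.sqrt with hRdef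
  have hR : R.PosSemidef := hX.posSemidef.posSemidef_sqrt
  have hRR : R * R = X := hX.posSemidef.sqrt_mul_self
  have hdetR : R.det * R.det = X.det := by rw [← det_mul, hRR]
  have hdetRne : R.det ≠ 0 := by
    intro h
    rw [h, mul_zero] at hdetR
    exact hX.det_pos.ne' hdetR.symm
  have hRu : IsUnit R := (isUnit_iff_isUnit_det _).2 hdetRne.isUnit
  have hRiu : IsUnit R⁻¹ := by
    rw [Matrix.isUnit_nonsing_inv_iff]
    exact hRu
  set Z := R⁻¹ * Y * R⁻¹ with hZdef
  have hZ : Z.PosDef := posDef_conj hY hR.1.inv hRiu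
  have h1 : R * R⁻¹ = 1 := mul_nonsing_inv _ hdetRne.isUnit
  have h2 : R⁻¹ * R = 1 := nonsing_inv_mul _ hdetRne.isUnit
  have hY' : R * Z * R = Y := by
    rw [hZdef]
    calc R * (R⁻¹ * Y * R⁻¹) * R = (R * R⁻¹) * Y * (R⁻¹ * R) := by
          simp only [mul_assoc]
      _ = Y := by rw [h1, h2, one_mul, mul_one]
  have hcomb : a • X + b • Y = R * (a • (1 : Matrix (Fin d) (Fin d) ℝ) + b • Z) * R := by
    symm
    calc R * (a • (1 : Matrix (Fin d) (Fin d) ℝ) + b • Z) * R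
        = a • (R * 1 * R) + b • (R * Z * R) := by
          simp [mul_add, add_mul, mul_smul_comm, smul_mul_assoc]
      _ = a • X + b • Y := by rw [mul_one, hRR, hY']
  set lam := hZ.1.eigenvalues with hlamdef
  have hlam : ∀ i, 0 < lam i := hZ.eigenvalues_pos
  have hdetZ : Z.det = ∏ i, lam i := by
    simpa using hZ.1.det_eq_prod_eigenvalues
  set U := (hZ.1.eigenvectorUnitary : Matrix (Fin d) (Fin d) ℝ) with hUdef
  have hUU : U * star U = 1 := (Matrix.mem_unitaryGroup_iff).mp hZ.1.eigenvectorUnitary.2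
  have hUdet : U.det * (star U).det = 1 := by rw [← det_mul, hUU, det_one]
  have hspec : Z = U * diagonal lam * star U := by
    have := hZ.1.spectral_theorem
    simpa using this
  have hdiag : a • (1 : Matrix (Fin d) (Fin d) ℝ) + b • Z
      = U * diagonal (fun i => a + b * lam i) * star U := by
    have h11 : (1 : Matrix (Fin d) (Fin d) ℝ) = U * 1 * star U := by
      rw [mul_one, hUU]
    calc a • (1 : Matrix (Fin d) (Fin d) ℝ) + b • Z
        = a • (U * 1 * star U) + b • (U * diagonal lam * star U) := by
          rw [← h11, ← hspec]
      _ = U * (a • (1 : Matrix (Fin d) (Fin d) ℝ) + b • diagonal lam) * star U := by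
          simp [mul_add, add_mul, mul_smul_comm, smul_mul_assoc]
      _ = U * diagonal (fun i => a + b * lam i) * star U := by
          congr 1
          congr 1
          rw [← diagonal_one, ← diagonal_smul, ← diagonal_smul, diagonal_add]
          congr 1
          funext i
          simp
  have hposterm : ∀ i, 0 < a + b * lam i := by
    intro i
    have := mul_pos hb0 (hlam i)
    linarith
  have hdetcomb : (a • X + b • Y).det = X.det * ∏ i, (a + b * lam i) := by
    rw [hcomb, hdiag]
    rw [det_mul, det_mul, det_mul, det_mul, det_diagonal]
    linear_combination (R.det ^ 2 * ∏ i, (a + b * lam i)) * hUdet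
      + (∏ i, (a + b * lam i)) * hdetR
  have hdetY : Y.det = X.det * Z.det := by
    rw [← hY', det_mul, det_mul, ← hdetR]; ring
  have hlogcomb : Real.log (a • X + b • Y).det
      = Real.log X.det + ∑ i, Real.log (a + b * lam i) := by
    rw [hdetcomb, Real.log_mul hX.det_pos.ne'
      (Finset.prod_ne_zero_iff.mpr fun i _ => (hposterm i).ne'),
      Real.log_prod fun i _ => (hposterm i).ne']
  have hlogY : Real.log Y.det = Real.log X.det + ∑ i, Real.log (lam i) := by
    rw [hdetY, hdetZ, Real.log_mul hX.det_pos.ne'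
      (Finset.prod_ne_zero_iff.mpr fun i _ => (hlam i).ne'),
      Real.log_prod fun i _ => (hlam i).ne']
  have hterm : ∀ i, b * Real.log (lam i) ≤ Real.log (a + b * lam i) := by
    intro i
    have := (strictConcaveOn_log_Ioi.concaveOn).2 (Set.mem_Ioi.mpr one_pos)
      (Set.mem_Ioi.mpr (hlam i)) ha hb hab
    simpa using this
  have hsum : b * ∑ i, Real.log (lam i) ≤ ∑ i, Real.log (a + b * lam i) := by
    rw [Finset.mul_sum]
    exact Finset.sum_le_sum fun i _ => hterm i
  have hL : a * Real.log X.det + b * Real.log X.det = Real.log X.det := by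
    rw [← add_mul, hab, one_mul]
  rw [hlogcomb, hlogY]
  nlinarith [hsum]

lemma specNorm_nonneg (M : Matrix (Fin d) (Fin d) ℝ) : 0 ≤ specNorm M := norm_nonneg _

lemma frobNorm_nonneg (M : Matrix (Fin d) (Fin d) ℝ) : 0 ≤ frobNorm M := Real.sqrt_nonneg _

lemma specNorm_combo (M N : Matrix (Fin d) (Fin d) ℝ) {a b : ℝ} (ha : 0 ≤ a) (hb : 0 ≤ b) :
    specNorm (a • M + b • N) ≤ a * specNorm M + b * specNorm N := by
  unfold specNorm
  rw [map_add, _root_.map_smul, _root_.map_smul]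
  calc ‖a • toEuclideanCLM (𝕜 := ℝ) M + b • toEuclideanCLM (𝕜 := ℝ) N‖
      ≤ ‖a • toEuclideanCLM (𝕜 := ℝ) M‖ + ‖b • toEuclideanCLM (𝕜 := ℝ) N‖ := norm_add_le _ _
    _ = a * ‖toEuclideanCLM (𝕜 := ℝ) M‖ + b * ‖toEuclideanCLM (𝕜 := ℝ) N‖ := by
        rw [norm_smul (a : ℝ) (toEuclideanCLM (𝕜 := ℝ) M),
          norm_smul (b : ℝ) (toEuclideanCLM (𝕜 := ℝ) N), Real.norm_eq_abs, abs_of_nonneg ha,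
          Real.norm_eq_abs, abs_of_nonneg hb]

section Frob

attribute [local instance] Matrix.frobeniusNormedAddCommGroup Matrix.frobeniusNormedSpace

lemma frobNorm_eq_norm (M : Matrix (Fin d) (Fin d) ℝ) : frobNorm M = ‖M‖ := by
  rw [Matrix.frobenius_norm_def, frobNorm, Real.sqrt_eq_rpow]
  congr 1
  refine Finset.sum_congr rfl fun i _ => Finset.sum_congr rfl fun j _ => ?_
  rw [Real.norm_eq_abs, Real.rpow_two, sq_abs]

lemma frobNorm_combo (M N : Matrix (Fin d) (Fin d) ℝ) {a b : ℝ} (ha : 0 ≤ a) (hb : 0 ≤ b) :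
    frobNorm (a • M + b • N) ≤ a * frobNorm M + b * frobNorm N := by
  rw [frobNorm_eq_norm, frobNorm_eq_norm, frobNorm_eq_norm]
  calc ‖a • M + b • N‖ ≤ ‖a • M‖ + ‖b • N‖ := norm_add_le _ _
    _ = a * ‖M‖ + b * ‖N‖ := by
        rw [norm_smul, norm_smul, Real.norm_eq_abs, abs_of_nonneg ha,
          Real.norm_eq_abs, abs_of_nonneg hb]

end Frob

lemma specNorm_diagonal_le {v : Fin d → ℝ} {C : ℝ} (hC : 0 ≤ C) (hv : ∀ i, |v i| ≤ C) :
    specNorm (diagonal v) ≤ C := by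
  unfold specNorm
  refine ContinuousLinearMap.opNorm_le_bound _ hC fun x => ?_
  have hco : ∀ i, (toEuclideanCLM (𝕜 := ℝ) (diagonal v) x) i = v i * x i := by
    intro i
    show (diagonal v *ᵥ (fun j => x j)) i = v i * x i
    rw [mulVec_diagonal]
  rw [EuclideanSpace.norm_eq, EuclideanSpace.norm_eq]
  rw [← Real.sqrt_sq hC, ← Real.sqrt_mul (sq_nonneg C)]
  apply Real.sqrt_le_sqrt
  rw [Finset.mul_sum]
  refine Finset.sum_le_sum fun i _ => ?_
  rw [hco i]
  simp only [Real.norm_eq_abs, sq_abs]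
  rw [mul_pow]
  have h1 : v i ^ 2 ≤ C ^ 2 := by
    rw [← sq_abs]
    exact pow_le_pow_left₀ (abs_nonneg _) (hv i) 2
  exact mul_le_mul_of_nonneg_right h1 (sq_nonneg _)

lemma euclid_dotProduct_self (x : EuclideanSpace ℝ (Fin d)) :
    (⇑x : Fin d → ℝ) ⬝ᵥ ⇑x = ‖x‖ ^ 2 := by
  rw [EuclideanSpace.norm_eq, Real.sq_sqrt (Finset.sum_nonneg fun i _ => sq_nonneg _)]
  refine Finset.sum_congr rfl fun i _ => ?_
  rw [Real.norm_eq_abs, sq_abs, sq]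

lemma specNorm_lt_one {M : Matrix (Fin d) (Fin d) ℝ} (hM : M.IsHermitian)
    (h1 : (1 - M).PosDef) (h2 : (1 + M).PosDef) : specNorm M < 1 := by
  rcases Nat.eq_zero_or_pos d with hd | hd
  · subst hd
    have h0 : ∀ y : EuclideanSpace ℝ (Fin 0), ‖y‖ = 0 := fun y => by
      simp [EuclideanSpace.norm_eq]
    have : specNorm M ≤ 0 := by
      unfold specNorm
      refine ContinuousLinearMap.opNorm_le_bound _ le_rfl fun x => ?_
      rw [h0]
      simp
    linarith
  have hlam : ∀ i, |hM.eigenvalues i| < 1 := by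
    intro i
    set x := hM.eigenvectorBasis i with hxdef
    have hxn : ‖x‖ = 1 := hM.eigenvectorBasis.orthonormal.1 i
    have hxx : (⇑x : Fin d → ℝ) ⬝ᵥ ⇑x = 1 := by
      rw [euclid_dotProduct_self, hxn, one_pow]
    have hx0 : (⇑x : Fin d → ℝ) ≠ 0 := by
      intro h
      refine hM.eigenvectorBasis.orthonormal.ne_zero i ?_
      ext j
      exact congrFun h j
    have hev : hM.eigenvalues i = (⇑x : Fin d → ℝ) ⬝ᵥ (M *ᵥ ⇑x) := by
      simpa using hM.eigenvalues_eq i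
    have hu := h1.dotProduct_mulVec_pos hx0
    have hl := h2.dotProduct_mulVec_pos hx0
    simp only [star_trivial, sub_mulVec, add_mulVec, one_mulVec, dotProduct_sub,
      dotProduct_add, hxx] at hu hl
    rw [abs_lt]
    constructor <;> [linarith [hl, hev ▸ hl]; linarith [hu, hev ▸ hu]]
  haveI : Nonempty (Fin d) := ⟨⟨0, hd⟩⟩
  haveI : Nontrivial (EuclideanSpace ℝ (Fin d)) := by
    refine nontrivial_of_ne (EuclideanSpace.single ⟨0, hd⟩ (1 : ℝ)) 0 ?_
    intro h
    have h1' : (EuclideanSpace.single (⟨0, hd⟩ : Fin d) (1 : ℝ)) ⟨0, hd⟩ = 0 := by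
      rw [h]; rfl
    rw [EuclideanSpace.single_apply] at h1'
    simp at h1'
  set C := Finset.univ.sup' Finset.univ_nonempty (fun i => |hM.eigenvalues i|) with hCdef
  have hCb : ∀ i, |hM.eigenvalues i| ≤ C := fun i =>
    Finset.le_sup' (fun j => |hM.eigenvalues j|) (Finset.mem_univ i)
  have hC0 : 0 ≤ C := le_trans (abs_nonneg _) (hCb (Classical.arbitrary _))
  have hC1 : C < 1 := by
    rw [hCdef, Finset.sup'_lt_iff]
    exact fun i _ => hlam i
  set U := (hM.eigenvectorUnitary : Matrix (Fin d) (Fin d) ℝ) with hUdef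
  have hUU : U * star U = 1 := (Matrix.mem_unitaryGroup_iff).mp hM.eigenvectorUnitary.2
  have hUU' : star U * U = 1 := (Matrix.mem_unitaryGroup_iff').mp hM.eigenvectorUnitary.2
  set e := (toEuclideanCLM (n := Fin d) (𝕜 := ℝ))
  have hnormU : ‖e U‖ = 1 := by
    have hsq : ‖e U‖ * ‖e U‖ = 1 := by
      rw [← CStarRing.norm_star_mul_self (x := e U), ← map_star, ← _root_.map_mul, hUU',
        _root_.map_one]
      exact norm_one
    rcases mul_self_eq_one_iff.mp hsq with h | h
    · exact h
    · nlinarith [norm_nonneg (e U)]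
  have hnormUs : ‖e (star U)‖ = 1 := by
    have hsq : ‖e (star U)‖ * ‖e (star U)‖ = 1 := by
      rw [← CStarRing.norm_star_mul_self (x := e (star U)), ← map_star, ← _root_.map_mul,
        star_star, hUU, _root_.map_one]
      exact norm_one
    rcases mul_self_eq_one_iff.mp hsq with h | h
    · exact h
    · nlinarith [norm_nonneg (e (star U))]
  have hspec : M = U * diagonal hM.eigenvalues * star U := by
    simpa using hM.spectral_theorem
  have hDle : specNorm (diagonal hM.eigenvalues) ≤ C := specNorm_diagonal_le hC0 hCb
  calc specNorm M = ‖e (U * diagonal hM.eigenvalues * star U)‖ :=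
        congrArg (fun A => ‖toEuclideanCLM (n := Fin d) (𝕜 := ℝ) A‖) hspec
    _ = ‖e U * e (diagonal hM.eigenvalues) * e (star U)‖ := by
        rw [_root_.map_mul, _root_.map_mul]
    _ ≤ ‖e U * e (diagonal hM.eigenvalues)‖ * ‖e (star U)‖ := norm_mul_le _ _
    _ ≤ ‖e U‖ * ‖e (diagonal hM.eigenvalues)‖ * ‖e (star U)‖ := by
        apply mul_le_mul_of_nonneg_right (norm_mul_le _ _) (norm_nonneg _)
    _ = specNorm (diagonal hM.eigenvalues) := by rw [hnormU, hnormUs, one_mul, mul_one]; rfl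
    _ ≤ C := hDle
    _ < 1 := hC1

lemma partB {c a b N1 N2 N s1 s2 s : ℝ} (hc : 0 ≤ c) (ha : 0 < a) (hb : 0 < b)
    (hab : a + b = 1)
    (hN : 0 ≤ N) (hNle : N ≤ a * N1 + b * N2) (hs1 : s1 < 1) (hs2 : s2 < 1)
    (hsle : s ≤ a * s1 + b * s2) :
    c * N ^ 2 / (1 - s) ≤ a * (c * N1 ^ 2 / (1 - s1)) + b * (c * N2 ^ 2 / (1 - s2)) := by
  have ht1 : 0 < 1 - s1 := by linarith
  have ht2 : 0 < 1 - s2 := by linarith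
  have htc : 0 < a * (1 - s1) + b * (1 - s2) :=
    add_pos (mul_pos ha ht1) (mul_pos hb ht2)
  have hts : a * (1 - s1) + b * (1 - s2) ≤ 1 - s := by nlinarith
  have step1 : N ^ 2 / (1 - s) ≤ (a * N1 + b * N2) ^ 2 / (a * (1 - s1) + b * (1 - s2)) :=
    div_le_div₀ (sq_nonneg _) (pow_le_pow_left₀ hN hNle 2) htc hts
  have step2 : (a * N1 + b * N2) ^ 2 / (a * (1 - s1) + b * (1 - s2))
      ≤ a * (N1 ^ 2 / (1 - s1)) + b * (N2 ^ 2 / (1 - s2)) := by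
    have hre : a * (N1 ^ 2 / (1 - s1)) + b * (N2 ^ 2 / (1 - s2))
        = (a * N1 ^ 2 * (1 - s2) + b * N2 ^ 2 * (1 - s1)) / ((1 - s1) * (1 - s2)) := by
      field_simp
    rw [hre, div_le_div_iff₀ htc (mul_pos ht1 ht2)]
    nlinarith [mul_nonneg (mul_nonneg ha.le hb.le)
      (sq_nonneg (N1 * (1 - s2) - N2 * (1 - s1)))]
  calc c * N ^ 2 / (1 - s) = c * (N ^ 2 / (1 - s)) := by rw [mul_div_assoc]
    _ ≤ c * (a * (N1 ^ 2 / (1 - s1)) + b * (N2 ^ 2 / (1 - s2))) :=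
        mul_le_mul_of_nonneg_left (step1.trans step2) hc
    _ = a * (c * N1 ^ 2 / (1 - s1)) + b * (c * N2 ^ 2 / (1 - s2)) := by ring

end Stmt13Aux

open Stmt13Aux in
theorem stmt13 {d : ℕ} (Θs : Matrix (Fin d) (Fin d) ℝ) (hΘs : Θs.PosDef)
    (c : ℝ) (hc : 0 ≤ c) :
    ConvexOn ℝ
      {H : Matrix (Fin d) (Fin d) ℝ |
        H.IsSymm ∧ (Θs⁻¹ - H).PosDef ∧ (H + Θs⁻¹).PosDef}
      (fun H =>
        -(1/2) * Real.log ((1 - hΘs.posSemidef.sqrt * H * hΘs.posSemidef.sqrt).det)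
        + c * (frobNorm (hΘs.posSemidef.sqrt * H * hΘs.posSemidef.sqrt))^2 /
            (1 - specNorm (hΘs.posSemidef.sqrt * H * hΘs.posSemidef.sqrt))) := by
  classical
  set S := hΘs.posSemidef.sqrt with hSdef
  have hS : S.PosSemidef := hΘs.posSemidef.posSemidef_sqrt
  have hSS : S * S = Θs := hΘs.posSemidef.sqrt_mul_self
  have hdetS : S.det * S.det = Θs.det := by rw [← det_mul, hSS]
  have hdetSne : S.det ≠ 0 := by
    intro h
    rw [h, mul_zero] at hdetS
    exact hΘs.det_pos.ne' hdetS.symm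
  have hS1 : S * Θs⁻¹ * S = 1 := by
    rw [← hSS, Matrix.mul_inv_rev]
    calc S * (S⁻¹ * S⁻¹) * S = (S * S⁻¹) * (S⁻¹ * S) := by simp only [mul_assoc]
      _ = 1 := by
          rw [mul_nonsing_inv _ hdetSne.isUnit, nonsing_inv_mul _ hdetSne.isUnit, one_mul]
  have hfacts : ∀ H : Matrix (Fin d) (Fin d) ℝ,
      H ∈ {H : Matrix (Fin d) (Fin d) ℝ | H.IsSymm ∧ (Θs⁻¹ - H).PosDef ∧ (H + Θs⁻¹).PosDef} →
      (1 - S * H * S).PosDef ∧ specNorm (S * H * S) < 1 := by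
    intro H hH
    obtain ⟨hsym, hPD1, hPD2⟩ := hH
    have hHer : (S * H * S).IsHermitian := by
      have hH' : H.IsHermitian := isHermitian_of_isSymm hsym
      show (S * H * S)ᴴ = S * H * S
      rw [conjTranspose_mul, conjTranspose_mul, hH', hS.1, mul_assoc]
    have e1 : S * (Θs⁻¹ - H) * S = 1 - S * H * S := by
      rw [Matrix.mul_sub, Matrix.sub_mul, hS1]
    have e2 : S * (H + Θs⁻¹) * S = S * H * S + 1 := by
      rw [Matrix.mul_add, Matrix.add_mul, hS1]
    have p1 : (1 - S * H * S).PosDef := by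
      have := posDef_conj hPD1 hS.1 ((isUnit_iff_isUnit_det _).2 hdetSne.isUnit)
      rwa [e1] at this
    have p2 : (1 + S * H * S).PosDef := by
      have := posDef_conj hPD2 hS.1 ((isUnit_iff_isUnit_det _).2 hdetSne.isUnit)
      rw [e2] at this
      rwa [add_comm] at this
    exact ⟨p1, specNorm_lt_one hHer p1 p2⟩
  constructor
  · -- convexity of the set
    intro x hx y hy a b ha hb hab
    rcases eq_or_lt_of_le ha with ha0 | ha0
    · have hb1 : b = 1 := by linarith
      simpa [← ha0, hb1] using hy
    rcases eq_or_lt_of_le hb with hb0 | hb0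
    · have ha1 : a = 1 := by linarith
      simpa [← hb0, ha1] using hx
    obtain ⟨hx1, hx2, hx3⟩ := hx
    obtain ⟨hy1, hy2, hy3⟩ := hy
    refine ⟨?_, ?_, ?_⟩
    · show (a • x + b • y)ᵀ = a • x + b • y
      rw [transpose_add, transpose_smul, transpose_smul, hx1, hy1]
    · have hid : Θs⁻¹ - (a • x + b • y) = a • (Θs⁻¹ - x) + b • (Θs⁻¹ - y) := by
        calc Θs⁻¹ - (a • x + b • y) = (a + b) • Θs⁻¹ - (a • x + b • y) := by
              rw [hab, one_smul]
          _ = a • (Θs⁻¹ - x) + b • (Θs⁻¹ - y) := by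
              rw [add_smul, smul_sub, smul_sub]; abel
      rw [hid]
      exact (posDef_smul hx2 ha0).add (posDef_smul hy2 hb0)
    · have hid : (a • x + b • y) + Θs⁻¹ = a • (x + Θs⁻¹) + b • (y + Θs⁻¹) := by
        calc (a • x + b • y) + Θs⁻¹ = (a • x + b • y) + (a + b) • Θs⁻¹ := by
              rw [hab, one_smul]
          _ = a • (x + Θs⁻¹) + b • (y + Θs⁻¹) := by
              rw [add_smul, smul_add, smul_add]; abel
      rw [hid]
      exact (posDef_smul hx3 ha0).add (posDef_smul hy3 hb0)
  · -- the convexity inequality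
    intro x hx y hy a b ha hb hab
    rcases eq_or_lt_of_le ha with ha0 | ha0
    · have hb1 : b = 1 := by linarith
      simp [← ha0, hb1]
    rcases eq_or_lt_of_le hb with hb0 | hb0
    · have ha1 : a = 1 := by linarith
      simp [← hb0, ha1]
    simp only [smul_eq_mul]
    obtain ⟨hXx, hsx⟩ := hfacts x hx
    obtain ⟨hXy, hsy⟩ := hfacts y hy
    have hM2 : S * (a • x + b • y) * S = a • (S * x * S) + b • (S * y * S) := by
      simp [mul_add, add_mul, mul_smul_comm, smul_mul_assoc]
    have hM1 : (1 : Matrix (Fin d) (Fin d) ℝ) - S * (a • x + b • y) * S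
        = a • (1 - S * x * S) + b • (1 - S * y * S) := by
      rw [hM2]
      calc (1 : Matrix (Fin d) (Fin d) ℝ) - (a • (S * x * S) + b • (S * y * S))
          = (a + b) • (1 : Matrix (Fin d) (Fin d) ℝ)
            - (a • (S * x * S) + b • (S * y * S)) := by rw [hab, one_smul]
        _ = a • (1 - S * x * S) + b • (1 - S * y * S) := by
            rw [add_smul, smul_sub, smul_sub]; abel
    have hA := logdet_concave hXx hXy ha hb hab
    have hA' : -(1/2 : ℝ) * Real.log ((1 - S * (a • x + b • y) * S).det)
        ≤ a * (-(1/2) * Real.log ((1 - S * x * S).det))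
          + b * (-(1/2) * Real.log ((1 - S * y * S).det)) := by
      rw [hM1]
      nlinarith [hA]
    have hNle : frobNorm (S * (a • x + b • y) * S)
        ≤ a * frobNorm (S * x * S) + b * frobNorm (S * y * S) := by
      rw [hM2]
      exact frobNorm_combo _ _ ha hb
    have hsle : specNorm (S * (a • x + b • y) * S)
        ≤ a * specNorm (S * x * S) + b * specNorm (S * y * S) := by
      rw [hM2]
      exact specNorm_combo _ _ ha hb
    have hB' := partB hc ha0 hb0 hab (frobNorm_nonneg (S * (a • x + b • y) * S)) hNle hsx hsy hsle
    linarith [hA', hB']
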